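/- arXiv:2602.09990 — 5 statements merged into one kernel-verified Lean document; each statement's English description precedes it below -/
import Mathlib

section
/- Let P be a polynomial of degree m ≥ 1 with complex coefficients, and suppose |P(z)| ≤ M for all |z| ≤ r (r > 0). Then for every R ≥ r and all z with |z| < R, one has |P'(z)| ≤ e·M·m·R^(m−1)/r^m. -/
open Polynomial Metric

/-- Bernstein-type estimate: if `P` is a polynomial of degree `m ≥ 1` with
`|P(z)| ≤ M` for `|z| ≤ r`, then for `R ≥ r` and `|z| < R` one has
`|P'(z)| ≤ e·M·m·R^(m-1)/r^m`. -/
theorem poly_deriv_bound (P : Polynomial ℂ) (m : ℕ) (hm : P.natDegree = m) (h1 : 1 ≤ m)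
    (M r R : ℝ) (hr : 0 < r) (hrR : r ≤ R)
    (hP : ∀ z : ℂ, ‖z‖ ≤ r → ‖P.eval z‖ ≤ M) :
    ∀ z : ℂ, ‖z‖ < R →
      ‖(Polynomial.derivative P).eval z‖ ≤ Real.exp 1 * M * m * R ^ (m - 1) / r ^ m := by
  have hM : 0 ≤ M := le_trans (norm_nonneg _) (hP 0 (by simpa using hr.le))
  have hR : (0:ℝ) < R := lt_of_lt_of_le hr hrR
  -- reversed polynomial
  set Q : Polynomial ℂ := ∑ k ∈ Finset.range (m+1), C (P.coeff k) * X^(m-k) with hQ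
  have hQeval : ∀ u : ℂ, u ≠ 0 → Q.eval u = u^m * P.eval u⁻¹ := by
    intro u hu
    rw [hQ, eval_finset_sum, P.eval_eq_sum_range' (by omega : P.natDegree < m+1), Finset.mul_sum]
    refine Finset.sum_congr rfl fun k hk => ?_
    simp only [Finset.mem_range] at hk
    rw [eval_mul, eval_C, eval_pow, eval_X, pow_sub₀ u hu (by omega : k ≤ m)]
    field_simp
    rw [mul_assoc, ← mul_pow, mul_one_div_cancel hu, one_pow, mul_one]
  -- max modulus on the disk of radius r⁻¹ for Q
  have claim1 : ∀ u : ℂ, ‖u‖ ≤ r⁻¹ → ‖Q.eval u‖ ≤ M / r^m := by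
    intro u hu
    have hr' : (0:ℝ) < r⁻¹ := by positivity
    refine Complex.norm_le_of_forall_mem_frontier_norm_le (isBounded_ball (x := (0:ℂ)) (r := r⁻¹))
      (Q.differentiable.diffContOnCl) ?_ ?_
    · intro w hw
      rw [frontier_ball _ hr'.ne'] at hw
      simp only [mem_sphere_iff_norm, sub_zero] at hw
      have hw0 : w ≠ 0 := by intro h; rw [h] at hw; simp at hw; linarith [hw, hr'.ne']
      rw [hQeval w hw0]
      have h1' : ‖P.eval w⁻¹‖ ≤ M := hP _ (by rw [norm_inv, hw, inv_inv])
      calc ‖w^m * P.eval w⁻¹‖ = ‖w‖^m * ‖P.eval w⁻¹‖ := by rw [norm_mul, norm_pow]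
        _ ≤ (r⁻¹)^m * M := by
            apply mul_le_mul (by rw [hw]) h1' (norm_nonneg _) (by positivity)
        _ = M / r^m := by rw [inv_pow]; ring
    · rw [closure_ball _ hr'.ne']; simpa using hu
  -- growth bound
  have claim3 : ∀ (s : ℝ) (w : ℂ), r ≤ s → ‖w‖ ≤ s → ‖P.eval w‖ ≤ M * s^m / r^m := by
    intro s w hs hws
    have hsr : (1:ℝ) ≤ s^m / r^m := by
      rw [le_div_iff₀ (by positivity)]
      simpa using pow_le_pow_left₀ hr.le hs m
    rcases le_or_gt ‖w‖ r with h | h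
    · calc ‖P.eval w‖ ≤ M := hP w h
        _ = M * 1 := by ring
        _ ≤ M * (s^m / r^m) := by nlinarith
        _ = M * s^m / r^m := by ring
    · have hw0 : w ≠ 0 := by intro h0; rw [h0] at h; simp at h; linarith
      have hu : ‖w⁻¹‖ ≤ r⁻¹ := by
        rw [norm_inv]; exact inv_anti₀ hr h.le
      have := claim1 w⁻¹ hu
      rw [hQeval w⁻¹ (inv_ne_zero hw0), inv_inv] at this
      have hnorm : ‖(w⁻¹)^m * P.eval w‖ = ‖w‖⁻¹^m * ‖P.eval w‖ := by
        rw [norm_mul, norm_pow, norm_inv]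
      rw [hnorm] at this
      have hwpos : (0:ℝ) < ‖w‖ := lt_trans hr h
      have hne : ‖w‖ ≠ 0 := hwpos.ne'
      have h2 : ‖P.eval w‖ ≤ (M / r^m) * ‖w‖^m := by
        have h3 := mul_le_mul_of_nonneg_right this (by positivity : (0:ℝ) ≤ ‖w‖^m)
        calc ‖P.eval w‖ = ‖w‖⁻¹^m * ‖P.eval w‖ * ‖w‖^m := by
              field_simp
              rw [mul_assoc, ← mul_pow, one_div_mul_cancel hne, one_pow, mul_one]
          _ ≤ M / r^m * ‖w‖^m := h3
      calc ‖P.eval w‖ ≤ (M / r^m) * ‖w‖^m := h2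
        _ ≤ (M / r^m) * s^m := by
            apply mul_le_mul_of_nonneg_left (pow_le_pow_left₀ (norm_nonneg _) hws m) (by positivity)
        _ = M * s^m / r^m := by ring
  -- main estimate
  intro z hz
  have hρ : (0:ℝ) < R / m := by positivity
  have key : ‖deriv (fun w => P.eval w) z‖ ≤ (M * (R + R/m)^m / r^m) / (R / m) := by
    apply Complex.norm_deriv_le_of_forall_mem_sphere_norm_le hρ P.differentiable.diffContOnCl
    intro w hw
    simp only [mem_sphere_iff_norm] at hw
    apply claim3
    · calc r ≤ R := hrR
        _ ≤ R + R/m := by linarith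
    · calc ‖w‖ = ‖(w - z) + z‖ := by ring_nf
        _ ≤ ‖w - z‖ + ‖z‖ := norm_add_le _ _
        _ ≤ R/m + R := by rw [hw]; linarith
        _ = R + R/m := by ring
  rw [Polynomial.deriv] at key
  refine key.trans ?_
  have hem : ((1:ℝ) + 1/m)^m ≤ Real.exp 1 := by
    calc ((1:ℝ) + 1/m)^m ≤ (Real.exp (1/m))^m := by
          apply pow_le_pow_left₀ (by positivity)
          linarith [Real.add_one_le_exp (1/(m:ℝ))]
      _ = Real.exp 1 := by
          rw [← Real.exp_nat_mul]
          congr 1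
          field_simp
  have hRRm : (R + R/m)^m = R^m * (1 + 1/m)^m := by
    rw [← mul_pow]; congr 1; field_simp
  have hRm : R^m / R = R^(m-1) := by
    rw [eq_comm, eq_div_iff hR.ne', ← pow_succ]
    congr 1; omega
  calc M * (R + R/m)^m / r^m / (R/m)
      = (M * m * R^(m-1) / r^m) * (1 + 1/m)^m := by
        rw [hRRm, ← hRm]; field_simp
    _ ≤ (M * m * R^(m-1) / r^m) * Real.exp 1 := by
        apply mul_le_mul_of_nonneg_left hem (by positivity)
    _ = Real.exp 1 * M * m * R^(m-1) / r^m := by ring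
end

section
/- Let P be a polynomial of degree m ≥ 1, M > 0, r > 0 with |P(z)| ≤ M for |z| < r. Suppose |z₀| ≤ r and |P(z₀)| ≥ ηM for some 0 < η ≤ 1. Then for all z with |z − z₀| ≤ ηr/(8m), one has (1/2)|P(z₀)| ≤ |P(z)| ≤ (3/2)|P(z₀)|. -/
open Polynomial Metric

lemma poly_closed_bound (P : Polynomial ℂ) (M r : ℝ) (hr : 0 < r)
    (hP : ∀ z : ℂ, ‖z‖ < r → ‖P.eval z‖ ≤ M) :
    ∀ z : ℂ, ‖z‖ ≤ r → ‖P.eval z‖ ≤ M := by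
  intro z hz
  have hcont : ContinuousAt (fun t : ℝ => ‖P.eval ((t : ℂ) * z)‖) 1 := by
    exact ((P.continuous.comp (Complex.continuous_ofReal.mul continuous_const)).norm).continuousAt
  have htend : Filter.Tendsto (fun t : ℝ => ‖P.eval ((t : ℂ) * z)‖)
      (nhdsWithin 1 (Set.Iio 1)) (nhds ‖P.eval z‖) := by
    have h := hcont.tendsto.mono_left (nhdsWithin_le_nhds (s := Set.Iio (1:ℝ)))
    simpa using h
  refine le_of_tendsto htend ?_
  filter_upwards [Ioo_mem_nhdsLT_of_mem (show (1:ℝ) ∈ Set.Ioc 0 1 by norm_num)] with t ht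
  apply hP
  have : ‖(t : ℂ) * z‖ = t * ‖z‖ := by
    rw [norm_mul, Complex.norm_real, Real.norm_eq_abs, abs_of_pos ht.1]
  rw [this]
  calc t * ‖z‖ ≤ t * r := by nlinarith [ht.1, ht.2]
    _ < r := by nlinarith [ht.1, ht.2]

lemma poly_growth (P : Polynomial ℂ) (m : ℕ) (hm : P.natDegree ≤ m) (M r : ℝ)
    (hr : 0 < r) (hP : ∀ z : ℂ, ‖z‖ ≤ r → ‖P.eval z‖ ≤ M)
    (z : ℂ) (hz : r ≤ ‖z‖) : ‖P.eval z‖ ≤ M * (‖z‖ / r) ^ m := by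
  set Q : Polynomial ℂ := ∑ i ∈ Finset.range (m+1), C (P.coeff i * (r:ℂ)^i) * X^(m-i) with hQdef
  have key : ∀ w : ℂ, w ≠ 0 → Q.eval w = w^m * P.eval ((r:ℂ)/w) := by
    intro w hw
    rw [hQdef, eval_finset_sum,
      Polynomial.eval_eq_sum_range' (lt_of_le_of_lt hm (Nat.lt_succ_self m)), Finset.mul_sum]
    apply Finset.sum_congr rfl
    intro i hi
    simp only [eval_mul, eval_C, eval_pow, eval_X]
    have hpow : w ^ (m-i) * w ^ i = w ^ m := by
      rw [← pow_add]
      congr 1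
      have := Finset.mem_range.mp hi
      omega
    rw [div_pow, ← hpow]
    field_simp
  have hQb : ∀ u : ℂ, ‖u‖ ≤ 1 → ‖Q.eval u‖ ≤ M := by
    intro u hu
    have hfr : ∀ w ∈ frontier (ball (0:ℂ) 1), ‖Q.eval w‖ ≤ M := by
      intro w hw
      rw [frontier_ball (0:ℂ) one_ne_zero] at hw
      have hwn : ‖w‖ = 1 := mem_sphere_zero_iff_norm.mp hw
      have hw0 : w ≠ 0 := by
        intro h; rw [h, norm_zero] at hwn; norm_num at hwn
      rw [key w hw0, norm_mul, norm_pow, hwn, one_pow, one_mul]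
      apply hP
      rw [norm_div, Complex.norm_real, Real.norm_eq_abs, abs_of_pos hr, hwn, div_one]
    have hcl : u ∈ closure (ball (0:ℂ) 1) := by
      rw [closure_ball (0:ℂ) one_ne_zero]
      exact mem_closedBall_zero_iff.mpr hu
    exact Complex.norm_le_of_forall_mem_frontier_norm_le isBounded_ball
      (Q.differentiable.diffContOnCl) hfr hcl
  have hz0 : z ≠ 0 := by
    intro h; rw [h, norm_zero] at hz; linarith
  set w : ℂ := (r:ℂ)/z with hwdef
  have hw0 : w ≠ 0 := div_ne_zero (by exact_mod_cast hr.ne') hz0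
  have hwn : ‖w‖ = r / ‖z‖ := by
    rw [hwdef, norm_div, Complex.norm_real, Real.norm_eq_abs, abs_of_pos hr]
  have hwle : ‖w‖ ≤ 1 := by
    rw [hwn]
    exact div_le_one_of_le₀ hz (norm_nonneg z)
  have hr0 : (r:ℂ) ≠ 0 := by exact_mod_cast hr.ne'
  have hrw : (r:ℂ)/w = z := by
    rw [hwdef]
    field_simp
  have h2 : (r/‖z‖)^m * ‖P.eval z‖ ≤ M := by
    have := hQb w hwle
    rwa [key w hw0, hrw, norm_mul, norm_pow, hwn] at this
  have hzpos : 0 < ‖z‖ := lt_of_lt_of_le hr hz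
  rw [div_pow] at h2 ⊢
  have hne1 : ‖z‖^m ≠ 0 := by positivity
  have hne2 : r^m ≠ 0 := by positivity
  have hone : (‖z‖^m / r^m) * (r^m / ‖z‖^m) = 1 := by
    field_simp
  have hrez : ‖P.eval z‖ = (‖z‖^m / r^m) * (r^m / ‖z‖^m * ‖P.eval z‖) := by
    rw [← mul_assoc, hone, one_mul]
  rw [hrez]
  calc (‖z‖^m / r^m) * (r^m / ‖z‖^m * ‖P.eval z‖) ≤ (‖z‖^m / r^m) * M :=
        mul_le_mul_of_nonneg_left h2 (by positivity)
    _ = M * (‖z‖^m / r^m) := by ring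

/-- Local stability of a polynomial near a point where it is large: if `deg P = m ≥ 1`,
`|P(z)| ≤ M` for `|z| < r`, `|z₀| ≤ r` and `|P(z₀)| ≥ ηM` with `0 < η ≤ 1`, then
`(1/2)|P(z₀)| ≤ |P(z)| ≤ (3/2)|P(z₀)|` for `|z - z₀| ≤ ηr/(8m)`. -/
theorem poly_local_stability (P : Polynomial ℂ) (m : ℕ) (hm : P.natDegree = m)
    (h1 : 1 ≤ m) (M r η : ℝ) (hM : 0 < M) (hr : 0 < r) (hη0 : 0 < η) (hη1 : η ≤ 1)
    (hP : ∀ z : ℂ, ‖z‖ < r → ‖P.eval z‖ ≤ M)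
    (z₀ : ℂ) (hz₀ : ‖z₀‖ ≤ r) (hPz₀ : η * M ≤ ‖P.eval z₀‖) :
    ∀ z : ℂ, ‖z - z₀‖ ≤ η * r / (8 * m) →
      (1 / 2) * ‖P.eval z₀‖ ≤ ‖P.eval z‖ ∧ ‖P.eval z‖ ≤ (3 / 2) * ‖P.eval z₀‖ := by
  intro z hzd
  have hm1 : (1:ℝ) ≤ (m:ℝ) := by exact_mod_cast h1
  have hmpos : (0:ℝ) < (m:ℝ) := by linarith
  have hP' := poly_closed_bound P M r hr hP
  have hPz₀M : ‖P.eval z₀‖ ≤ M := hP' z₀ hz₀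
  set δ : ℝ := η * r / (8 * m) with hδdef
  set ρ : ℝ := r / m with hρdef
  have hρpos : 0 < ρ := by positivity
  have hδρ : δ ≤ ρ / 8 := by
    rw [hδdef, hρdef]
    rw [div_le_div_iff₀ (by positivity) (by norm_num)]
    have : η * r ≤ r := by nlinarith
    calc η * r * 8 ≤ r * 8 := by nlinarith
      _ = r / ↑m * (8 * ↑m) := by field_simp
  -- factor P(u) - P(z₀) = (u - z₀) Q(u)
  obtain ⟨Q, hQ⟩ := dvd_iff_isRoot.mpr (show (P - C (P.eval z₀)).IsRoot z₀ by simp [IsRoot])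
  have heval : ∀ u : ℂ, P.eval u - P.eval z₀ = (u - z₀) * Q.eval u := by
    intro u
    have := congrArg (eval u) hQ
    simpa using this
  -- bound exp
  have hexp1 : (1:ℝ) ≤ Real.exp 1 := by
    have := Real.add_one_le_exp (1:ℝ); linarith
  -- bound Q on sphere z₀ ρ
  have hQsphere : ∀ ζ ∈ frontier (ball z₀ ρ), ‖Q.eval ζ‖ ≤ (Real.exp 1 + 1) * M / ρ := by
    intro ζ hζ
    rw [frontier_ball z₀ hρpos.ne'] at hζ
    have hζn : ‖ζ - z₀‖ = ρ := by
      rw [mem_sphere_iff_norm] at hζ; exact hζ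
    have hPζ : ‖P.eval ζ‖ ≤ Real.exp 1 * M := by
      rcases le_or_gt ‖ζ‖ r with h | h
      · have := hP' ζ h
        nlinarith
      · have hg := poly_growth P m (le_of_eq hm) M r hr hP' ζ h.le
        have hζle : ‖ζ‖ ≤ r + ρ := by
          calc ‖ζ‖ = ‖(ζ - z₀) + z₀‖ := by ring_nf
            _ ≤ ‖ζ - z₀‖ + ‖z₀‖ := norm_add_le _ _
            _ ≤ ρ + r := by rw [hζn]; linarith
            _ = r + ρ := by ring
        have hpow : (‖ζ‖ / r) ^ m ≤ Real.exp 1 := by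
          have h1m : (r + ρ)/r = 1 + 1/m := by rw [hρdef]; field_simp
          calc (‖ζ‖ / r) ^ m ≤ ((r + ρ)/r) ^ m := by
                apply pow_le_pow_left₀ (by positivity) _ m
                gcongr
              _ = (1 + 1/(m:ℝ)) ^ m := by rw [h1m]
              _ ≤ (Real.exp (1/(m:ℝ))) ^ m := by
                apply pow_le_pow_left₀ (by positivity)
                have := Real.add_one_le_exp (1/(m:ℝ)); linarith
              _ = Real.exp 1 := by
                rw [← Real.exp_nat_mul]; congr 1; field_simp
        calc ‖P.eval ζ‖ ≤ M * (‖ζ‖ / r) ^ m := hg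
          _ ≤ M * Real.exp 1 := by nlinarith
          _ = Real.exp 1 * M := by ring
    have hmul : ρ * ‖Q.eval ζ‖ = ‖P.eval ζ - P.eval z₀‖ := by
      rw [heval ζ, norm_mul, hζn]
    have hbd : ‖P.eval ζ - P.eval z₀‖ ≤ Real.exp 1 * M + M := by
      calc ‖P.eval ζ - P.eval z₀‖ ≤ ‖P.eval ζ‖ + ‖P.eval z₀‖ := norm_sub_le _ _
        _ ≤ Real.exp 1 * M + M := by linarith
    have hmul2 : ρ * ‖Q.eval ζ‖ ≤ (Real.exp 1 + 1) * M := by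
      rw [hmul]; nlinarith
    rw [le_div_iff₀ hρpos]
    nlinarith [hmul2]
  have hQz : ‖Q.eval z‖ ≤ (Real.exp 1 + 1) * M / ρ := by
    have hcl : z ∈ closure (ball z₀ ρ) := by
      rw [closure_ball z₀ hρpos.ne', mem_closedBall_iff_norm]
      linarith
    exact Complex.norm_le_of_forall_mem_frontier_norm_le isBounded_ball
      (Q.differentiable.diffContOnCl) hQsphere hcl
  have hδ0 : 0 ≤ δ := by positivity
  have hkey : ‖P.eval z - P.eval z₀‖ ≤ (1/2) * ‖P.eval z₀‖ := by
    have h3 : Real.exp 1 < 3 := lt_trans Real.exp_one_lt_d9 (by norm_num)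
    have hstep : ‖P.eval z - P.eval z₀‖ ≤ δ * ((Real.exp 1 + 1) * M / ρ) := by
      rw [heval z, norm_mul]
      exact mul_le_mul hzd hQz (norm_nonneg _) hδ0
    have hval : δ * ((Real.exp 1 + 1) * M / ρ) = (Real.exp 1 + 1) * η * M / 8 := by
      rw [hδdef, hρdef]
      field_simp
    rw [hval] at hstep
    have : (Real.exp 1 + 1) * η * M / 8 ≤ (1/2) * (η * M) := by
      have h4 : 0 ≤ (3 - Real.exp 1) * (η * M) := mul_nonneg (by linarith) (mul_pos hη0 hM).le
      nlinarith [h4]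
    linarith
  have habs := abs_norm_sub_norm_le (P.eval z) (P.eval z₀)
  rw [abs_le] at habs
  constructor
  · linarith [habs.1]
  · linarith [habs.2]
end

section
/- For all real a, b and every sequence t_n → +∞, the ratio Γ(t_n + a)/Γ(t_n + b) is asymptotic to t_n^(a−b); more precisely, Γ(t+a)/Γ(t+b) = t^(a−b)·(1 + O(1/t)) as t → +∞. -/
open Real

noncomputable def gq (a t : ℝ) : ℝ := Real.Gamma (t + a) / Real.Gamma t * t ^ (-a)

lemma gq_base {s t : ℝ} (hs0 : 0 ≤ s) (hs1 : s ≤ 1) (ht : 1 ≤ t) :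
    1 - 1/t ≤ gq s t ∧ gq s t ≤ 1 := by
  have ht0 : (0:ℝ) < t := by linarith
  have hG : 0 < Real.Gamma t := Real.Gamma_pos_of_pos ht0
  have hGs : 0 < Real.Gamma (t + s) := Real.Gamma_pos_of_pos (by linarith)
  have hG1 : Real.Gamma (t + 1) = t * Real.Gamma t := by
    exact Real.Gamma_add_one (ne_of_gt ht0)
  rcases eq_or_lt_of_le hs0 with h0 | h0
  · simp only [gq, ← h0, add_zero, neg_zero, Real.rpow_zero, mul_one,
      div_self (ne_of_gt hG)]
    constructor
    · have : 0 < 1/t := by positivity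
      linarith
    · exact le_rfl
  rcases eq_or_lt_of_le hs1 with h1 | h1
  · subst h1
    have : gq 1 t = 1 := by
      simp only [gq, hG1, Real.rpow_neg_one]
      field_simp
    rw [this]
    constructor
    · have : 0 < 1/t := by positivity
      linarith
    · exact le_rfl
  -- now 0 < s < 1
  have key := Real.Gamma_mul_add_mul_le_rpow_Gamma_mul_rpow_Gamma (s := t) (t := t+1)
    (a := 1 - s) (b := s) ht0 (by linarith) (by linarith) h0 (by ring)
  have harg : (1 - s) * t + s * (t + 1) = t + s := by ring
  rw [harg, hG1, Real.mul_rpow (le_of_lt ht0) (le_of_lt hG),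
    mul_comm (t ^ s) (Real.Gamma t ^ s), ← mul_assoc,
    ← Real.rpow_add hG, sub_add_cancel, Real.rpow_one] at key
  have key2 := Real.Gamma_mul_add_mul_le_rpow_Gamma_mul_rpow_Gamma (s := t+s) (t := t+s+1)
    (a := s) (b := 1 - s) (by linarith) (by linarith) h0 (by linarith) (by ring)
  have harg2 : s * (t + s) + (1 - s) * (t + s + 1) = t + 1 := by ring
  have hGs1 : Real.Gamma (t + s + 1) = (t + s) * Real.Gamma (t + s) :=
    Real.Gamma_add_one (by positivity)
  rw [harg2, hG1, hGs1, Real.mul_rpow (by positivity) (le_of_lt hGs),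
    mul_comm ((t+s) ^ (1-s)) (Real.Gamma (t+s) ^ (1-s)), ← mul_assoc,
    ← Real.rpow_add hGs, add_sub_cancel, Real.rpow_one] at key2
  constructor
  · -- lower bound
    have hlow : t * Real.Gamma t / (t + s) ^ (1 - s) ≤ Real.Gamma (t + s) := by
      rw [div_le_iff₀ (by positivity)]; linarith [key2]
    have h1 : t * Real.Gamma t / (t + s) ^ (1 - s) / Real.Gamma t * t ^ (-s) ≤ gq s t := by
      unfold gq
      gcongr
    calc 1 - 1/t ≤ t / (t + s) := by
          rw [sub_le_iff_le_add, div_add_div _ _ (ne_of_gt (show (0:ℝ) < t+s by positivity)).symm.symm (ne_of_gt ht0), le_div_iff₀ (by positivity)]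
          nlinarith
      _ ≤ (t / (t + s)) ^ (1 - s) := by
          have hx0 : 0 < t / (t + s) := by positivity
          have hx1 : t / (t + s) ≤ 1 := by
            rw [div_le_one (by positivity)]; linarith
          calc t / (t + s) = (t / (t+s)) ^ (1:ℝ) := (Real.rpow_one _).symm
            _ ≤ (t / (t+s)) ^ (1 - s) := Real.rpow_le_rpow_of_exponent_ge hx0 hx1 (by linarith)
      _ = t * Real.Gamma t / (t + s) ^ (1 - s) / Real.Gamma t * t ^ (-s) := by
          rw [Real.div_rpow (le_of_lt ht0) (by positivity)]
          rw [Real.rpow_neg (le_of_lt ht0)]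
          have : t ^ (1 - s) = t * (t ^ s)⁻¹ := by
            rw [Real.rpow_sub ht0, Real.rpow_one, div_eq_mul_inv]
          rw [this]
          field_simp
      _ ≤ gq s t := h1
  · -- upper bound
    unfold gq
    rw [Real.rpow_neg (le_of_lt ht0), div_mul_eq_mul_div, div_le_one hG,
      mul_inv_le_iff₀ (by positivity : (0:ℝ) < t ^ s)]
    exact key

lemma gq_succ {a t : ℝ} (ht : 0 < t) (hta : t + a ≠ 0) :
    gq (a + 1) t = gq a t * ((t + a) / t) := by
  unfold gq
  have h1 : t + (a + 1) = (t + a) + 1 := by ring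
  rw [h1, Real.Gamma_add_one hta, neg_add, Real.rpow_add ht, Real.rpow_neg_one]
  field_simp

def Q (a : ℝ) : Prop := ∃ C t₀ : ℝ, 0 < C ∧ 0 < t₀ ∧ ∀ t : ℝ, t₀ ≤ t → |gq a t - 1| ≤ C / t

lemma Q_up {a : ℝ} (h : Q a) : Q (a + 1) := by
  obtain ⟨C, t₀, hC, ht₀, hb⟩ := h
  refine ⟨C * (1 + |a|) + |a| + 1, max t₀ (1 + |a|), by positivity, by positivity, ?_⟩
  intro t ht
  have ht1 : 1 + |a| ≤ t := le_trans (le_max_right _ _) ht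
  have habs : (0:ℝ) ≤ |a| := abs_nonneg a
  have ht0 : 0 < t := by have := abs_nonneg a; linarith
  have hta : 0 < t + a := by have := neg_abs_le a; linarith
  have hb' := hb t (le_trans (le_max_left _ _) ht)
  rw [gq_succ ht0 (ne_of_gt hta)]
  have heq : gq a t * ((t + a) / t) - 1 = (gq a t - 1) * ((t + a) / t) + a / t := by
    field_simp
    ring
  rw [heq]
  have h2 : |(t + a) / t| ≤ 1 + |a| := by
    rw [abs_div, abs_of_pos ht0, div_le_iff₀ ht0]
    calc |t + a| ≤ |t| + |a| := abs_add_le _ _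
      _ = t + |a| := by rw [abs_of_pos ht0]
      _ ≤ (1 + |a|) * t := by nlinarith [abs_nonneg a]
  have e2 : |a / t| = |a| / t := by rw [abs_div, abs_of_pos ht0]
  calc |(gq a t - 1) * ((t + a) / t) + a / t|
      ≤ |gq a t - 1| * |(t + a) / t| + |a| / t := by
        refine le_trans (abs_add_le _ _) ?_
        rw [abs_mul, e2]
    _ ≤ (C / t) * (1 + |a|) + |a| / t := by
        have h3 : 0 ≤ |gq a t - 1| := abs_nonneg _
        gcongr
    _ = (C * (1 + |a|) + |a|) / t := by
        rw [div_mul_eq_mul_div, ← add_div]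
    _ ≤ (C * (1 + |a|) + |a| + 1) / t := by
        rw [div_le_div_iff₀ ht0 ht0]
        nlinarith
lemma Q_down {a : ℝ} (h : Q a) : Q (a - 1) := by
  obtain ⟨C, t₀, hC, ht₀, hb⟩ := h
  refine ⟨2 * (C + |a - 1|) + 1, max t₀ (2 * (1 + |a - 1|)), by positivity, by positivity, ?_⟩
  intro t ht
  have ht2 : 2 * (1 + |a - 1|) ≤ t := le_trans (le_max_right _ _) ht
  have habs := abs_nonneg (a - 1)
  have ht0 : 0 < t := by linarith
  have hta : 1 ≤ t + (a - 1) := by have := neg_abs_le (a - 1); linarith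
  have hb' := hb t (le_trans (le_max_left _ _) ht)
  have hrec := gq_succ (a := a - 1) ht0 (by linarith)
  rw [sub_add_cancel] at hrec
  have hd : (1:ℝ)/2 ≤ (t + (a - 1)) / t := by
    rw [div_le_div_iff₀ (by norm_num) ht0]
    have := neg_abs_le (a - 1); linarith
  have hdpos : 0 < (t + (a - 1)) / t := by positivity
  have hgq : gq (a - 1) t = gq a t / ((t + (a - 1)) / t) := by
    rw [hrec]
    field_simp
  rw [hgq]
  have heq : gq a t / ((t + (a - 1)) / t) - 1
      = ((gq a t - 1) - (a - 1) / t) / ((t + (a - 1)) / t) := by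
    field_simp
    ring
  rw [heq, abs_div, abs_of_pos hdpos, div_le_iff₀ hdpos]
  have hnum : |gq a t - 1 - (a - 1) / t| ≤ (C + |a - 1|) / t := by
    calc |gq a t - 1 - (a - 1) / t| ≤ |gq a t - 1| + |(a - 1)/t| := abs_sub _ _
      _ ≤ C / t + |a - 1| / t := by
          rw [abs_div, abs_of_pos ht0]
          gcongr
      _ = (C + |a - 1|) / t := by rw [← add_div]
  calc |gq a t - 1 - (a - 1) / t| ≤ (C + |a - 1|) / t := hnum
    _ = (2 * (C + |a-1|)) / t * (1/2) := by ring
    _ ≤ (2 * (C + |a - 1|) + 1) / t * (1/2) := by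
        gcongr
        linarith
    _ ≤ (2 * (C + |a - 1|) + 1) / t * ((t + (a - 1)) / t) := by
        have h2 : (0:ℝ) ≤ (2 * (C + |a - 1|) + 1) / t := by positivity
        exact mul_le_mul_of_nonneg_left hd h2

lemma Q_all (a : ℝ) : Q a := by
  have base : ∀ s : ℝ, 0 ≤ s → s ≤ 1 → Q s := by
    intro s h0 h1
    refine ⟨1, 1, one_pos, one_pos, ?_⟩
    intro t ht
    obtain ⟨hl, hu⟩ := gq_base h0 h1 ht
    rw [abs_le]
    have h01 : (0:ℝ) < 1/t := by positivity
    constructor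
    · linarith
    · linarith
  have hind : ∀ n : ℤ, Q (Int.fract a + n) := by
    intro n
    induction n using Int.induction_on with
    | zero => simpa using base _ (Int.fract_nonneg a) (Int.fract_lt_one a).le
    | succ n ih =>
        convert Q_up ih using 1
        push_cast
        ring
    | pred n ih =>
        convert Q_down ih using 1
        push_cast
        ring
  have := hind ⌊a⌋
  rwa [Int.fract_add_floor] at this

/-- Asymptotics of Gamma quotients: `Γ(t+a)/Γ(t+b) = t^(a-b)(1 + O(1/t))` as
`t → +∞`; equivalently there are `C, t₀ > 0` with
`|Γ(t+a)/Γ(t+b) · t^(b−a) − 1| ≤ C/t` for `t ≥ t₀`. -/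
theorem gamma_ratio_asymptotic (a b : ℝ) :
    ∃ C t₀ : ℝ, 0 < C ∧ 0 < t₀ ∧ ∀ t : ℝ, t₀ ≤ t →
      |Real.Gamma (t + a) / Real.Gamma (t + b) * t ^ (b - a) - 1| ≤ C / t := by
  obtain ⟨C₁, t₁, hC₁, ht₁, hA⟩ := Q_all a
  obtain ⟨C₂, t₂, hC₂, ht₂, hB⟩ := Q_all b
  refine ⟨2 * (C₁ + C₂), max (max t₁ t₂) (max 1 (2 * C₂)), by positivity, by positivity, ?_⟩
  intro t ht
  have ht1 : (1:ℝ) ≤ t := le_trans (le_trans (le_max_left _ _) (le_max_right _ _)) ht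
  have ht0 : (0:ℝ) < t := by linarith
  have hA' := hA t (le_trans (le_trans (le_max_left _ _) (le_max_left _ _)) ht)
  have hB' := hB t (le_trans (le_trans (le_max_right _ _) (le_max_left _ _)) ht)
  have htC : 2 * C₂ ≤ t := le_trans (le_trans (le_max_right _ _) (le_max_right _ _)) ht
  have hgb : (1:ℝ)/2 ≤ gq b t := by
    have h1 : C₂ / t ≤ 1/2 := by
      rw [div_le_div_iff₀ ht0 (by norm_num)]; linarith
    have := abs_le.mp hB'
    linarith [this.1]
  have hG : 0 < Real.Gamma t := Real.Gamma_pos_of_pos ht0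
  have hGb : Real.Gamma (t + b) ≠ 0 := by
    intro h
    rw [show gq b t = Real.Gamma (t + b) / Real.Gamma t * t ^ (-b) from rfl, h] at hgb
    simp at hgb
    linarith
  have hid : Real.Gamma (t + a) / Real.Gamma (t + b) * t ^ (b - a) = gq a t / gq b t := by
    unfold gq
    rw [Real.rpow_sub ht0, Real.rpow_neg ht0.le, Real.rpow_neg ht0.le]
    have hta : (t : ℝ) ^ a ≠ 0 := by positivity
    have htb : (t : ℝ) ^ b ≠ 0 := by positivity
    field_simp
  rw [hid]
  have hgbpos : 0 < gq b t := by linarith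
  have heq : gq a t / gq b t - 1 = (gq a t - gq b t) / gq b t := by
    field_simp
  rw [heq, abs_div, abs_of_pos hgbpos, div_le_iff₀ hgbpos]
  have hnum : |gq a t - gq b t| ≤ (C₁ + C₂) / t := by
    calc |gq a t - gq b t| = |(gq a t - 1) - (gq b t - 1)| := by ring_nf
      _ ≤ |gq a t - 1| + |gq b t - 1| := abs_sub _ _
      _ ≤ C₁ / t + C₂ / t := add_le_add hA' hB'
      _ = (C₁ + C₂) / t := by rw [← add_div]
  calc |gq a t - gq b t| ≤ (C₁ + C₂) / t := hnum
    _ = 2 * (C₁ + C₂) / t * (1/2) := by ring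
    _ ≤ 2 * (C₁ + C₂) / t * gq b t := by
        have : (0:ℝ) ≤ 2 * (C₁ + C₂) / t := by positivity
        exact mul_le_mul_of_nonneg_left hgb this
end

section
/- Let α > 0, n ≥ 1, r > 0, M > 0, and suppose complex sequences (a_p)_{p≥0} and (p_{j,k})_{j≥0, 0≤k≤n−1} satisfy the recurrence a_{m+n}·Γ((m+n)α+1)/Γ(mα+1) = −∑_{k=0}^{n−1} ∑_{s=0}^{m} a_{s+k}·p_{m−s,k}·Γ((s+k)α+1)/Γ(sα+1) for all m ≥ 0, together with |p_{j,k}| ≤ M/r^(jα) for all j, k. Then there exists a sequence of positive reals (β_p) with β_p → 0 such that |a_p| ≤ β_p · ∏_{j=1}^{p−1}(r^(−α) + β_j) for all p ≥ 0; in particular limsup_{p→∞} |a_p|^(1/p) ≤ r^(−α). -/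
open Finset Filter

lemma my_gamma_four {x y c : ℝ} (hx : 0 < x) (hxy : x ≤ y) (hc : 0 ≤ c) :
    Real.Gamma (x + c) * Real.Gamma y ≤ Real.Gamma x * Real.Gamma (y + c) := by
  have hy : 0 < y := lt_of_lt_of_le hx hxy
  have hxc : 0 < x + c := by linarith
  have hyc : 0 < y + c := by linarith
  rcases eq_or_lt_of_le (by linarith : x ≤ y + c) with h | h
  · have hc0 : c = 0 := by linarith
    have hyx : y = x := by linarith
    simp [hc0, hyx]
  · set D := y + c - x with hD
    have hD0 : 0 < D := by simp [hD]; linarith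
    set t := c / D with ht
    have ht0 : 0 ≤ t := div_nonneg hc hD0.le
    have ht1 : t ≤ 1 := by
      rw [ht, div_le_one hD0]; linarith
    have hconv := Real.convexOn_log_Gamma
    have key1 : (Real.log ∘ Real.Gamma) (x + c)
        ≤ (1 - t) * (Real.log ∘ Real.Gamma) x + t * (Real.log ∘ Real.Gamma) (y + c) := by
      have := hconv.2 (Set.mem_Ioi.2 hx) (Set.mem_Ioi.2 hyc) (by linarith : (0:ℝ) ≤ 1 - t)
        ht0 (by ring)
      have harg : (1 - t) • x + t • (y + c) = x + c := by
        have : t * D = c := by rw [ht, div_mul_cancel₀ c hD0.ne']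
        simp only [smul_eq_mul]; nlinarith [this]
      rwa [harg] at this
    have key2 : (Real.log ∘ Real.Gamma) y
        ≤ t * (Real.log ∘ Real.Gamma) x + (1 - t) * (Real.log ∘ Real.Gamma) (y + c) := by
      have := hconv.2 (Set.mem_Ioi.2 hx) (Set.mem_Ioi.2 hyc) ht0
        (by linarith : (0:ℝ) ≤ 1 - t) (by ring)
      have harg : t • x + (1 - t) • (y + c) = y := by
        have : t * D = c := by rw [ht, div_mul_cancel₀ c hD0.ne']
        simp only [smul_eq_mul]; nlinarith [this]
      rwa [harg] at this
    have hsum : Real.log (Real.Gamma (x + c)) + Real.log (Real.Gamma y)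
        ≤ Real.log (Real.Gamma x) + Real.log (Real.Gamma (y + c)) := by
      simp only [Function.comp] at key1 key2; linarith
    have := Real.exp_le_exp.2 hsum
    rwa [Real.exp_add, Real.exp_add, Real.exp_log (Real.Gamma_pos_of_pos hxc),
      Real.exp_log (Real.Gamma_pos_of_pos hy), Real.exp_log (Real.Gamma_pos_of_pos hx),
      Real.exp_log (Real.Gamma_pos_of_pos hyc)] at this

lemma my_gamma_lower {x c : ℝ} (hx : 1 < x) (hc : 0 < c) :
    Real.Gamma x * (x - 1) ^ c ≤ Real.Gamma (x + c) := by
  have hx0 : 0 < x := by linarith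
  have hx1 : 0 < x - 1 := by linarith
  have hxc : 0 < x + c := by linarith
  set t := 1 / (1 + c) with ht
  have h1c : 0 < 1 + c := by linarith
  have ht0 : 0 ≤ t := by positivity
  have ht1 : t ≤ 1 := by rw [ht, div_le_one h1c]; linarith
  have hconv := Real.convexOn_log_Gamma
  have key : (Real.log ∘ Real.Gamma) x
      ≤ (1 - t) * (Real.log ∘ Real.Gamma) (x - 1) + t * (Real.log ∘ Real.Gamma) (x + c) := by
    have := hconv.2 (Set.mem_Ioi.2 hx1) (Set.mem_Ioi.2 hxc) (by linarith : (0:ℝ) ≤ 1 - t)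
      ht0 (by ring)
    have harg : (1 - t) • (x - 1) + t • (x + c) = x := by
      have htc : t * (1 + c) = 1 := by rw [ht, one_div, inv_mul_cancel₀ h1c.ne']
      simp only [smul_eq_mul]; nlinarith [htc]
    rwa [harg] at this
  -- Gamma x = (x-1) * Gamma (x-1)
  have hrec : Real.Gamma x = (x - 1) * Real.Gamma (x - 1) := by
    have h := Real.Gamma_add_one (ne_of_gt hx1)
    rw [sub_add_cancel] at h
    exact h
  have hlogrec : Real.log (Real.Gamma x)
      = Real.log (x - 1) + Real.log (Real.Gamma (x - 1)) := by
    rw [hrec, Real.log_mul (ne_of_gt hx1) (ne_of_gt (Real.Gamma_pos_of_pos hx1))]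
  simp only [Function.comp] at key
  set L := Real.log (Real.Gamma x) with hL
  set g := Real.log (x - 1) with hg
  set R := Real.log (Real.Gamma (x + c)) with hR
  have htc : t * (1 + c) = 1 := by rw [ht, one_div, inv_mul_cancel₀ h1c.ne']
  have hu : (1 + c) * (1 - t) = c := by linear_combination -htc
  have h2 : L ≤ (1 - t) * (L - g) + t * R := by
    have hval : Real.log (Real.Gamma (x - 1)) = L - g := by rw [hL, hg]; linarith [hlogrec]
    rwa [hval] at key
  have h5 := mul_le_mul_of_nonneg_left h2 h1c.le
  have hRHS : (1 + c) * ((1 - t) * (L - g) + t * R) = c * (L - g) + R := by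
    linear_combination (L - g) * hu + R * htc
  rw [hRHS] at h5
  have hkey2 : L + c * g ≤ R := by linarith
  have hfin := Real.exp_le_exp.2 hkey2
  rw [Real.exp_add, Real.exp_log (Real.Gamma_pos_of_pos hx0), hR,
    Real.exp_log (Real.Gamma_pos_of_pos hxc)] at hfin
  rw [Real.rpow_def_of_pos hx1, mul_comm (Real.log (x - 1)) c]
  exact hfin

set_option maxHeartbeats 1000000 in
/-- Majorant estimate for coefficients of an `α`-analytic solution: if `(aₚ)` satisfies
the recurrence coming from the fractional equation and the coefficients `p_{j,k}` obey
`|p_{j,k}| ≤ M/r^(jα)`, then there is a positive sequence `βₚ → 0` with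
`|aₚ| ≤ βₚ ∏_{j=1}^{p-1}(r^(−α) + βⱼ)`; in particular
`limsup |aₚ|^(1/p) ≤ r^(−α)`. -/
theorem coefficient_majorant_estimate (α : ℝ) (hα : 0 < α) (n : ℕ) (hn : 1 ≤ n)
    (r M : ℝ) (hr : 0 < r) (hM : 0 < M) (a : ℕ → ℂ) (p : ℕ → ℕ → ℂ)
    (hp : ∀ j k : ℕ, k < n → ‖p j k‖ ≤ M / r ^ ((j : ℝ) * α))
    (hrec : ∀ m : ℕ,
      a (m + n) * (Real.Gamma (((m : ℝ) + n) * α + 1) / Real.Gamma ((m : ℝ) * α + 1))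
        = -∑ k ∈ Finset.range n, ∑ s ∈ Finset.range (m + 1),
            a (s + k) * p (m - s) k *
              (Real.Gamma (((s : ℝ) + k) * α + 1) / Real.Gamma ((s : ℝ) * α + 1))) :
    ∃ β : ℕ → ℝ, (∀ q : ℕ, 0 < β q) ∧ Tendsto β atTop (nhds 0) ∧
      (∀ q : ℕ, ‖a q‖ ≤ β q * ∏ j ∈ Finset.Icc 1 (q - 1), (r ^ (-α) + β j)) ∧
      Filter.limsup (fun q : ℕ => ‖a q‖ ^ ((1 : ℝ) / q)) atTop ≤ r ^ (-α) := by
  set ρ : ℝ := r ^ (-α) with hρdef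
  have hρ : (0:ℝ) < ρ := Real.rpow_pos_of_pos hr _
  have hΓ : ∀ x : ℝ, 0 ≤ x → 0 < Real.Gamma (x * α + 1) := by
    intro x hx
    exact Real.Gamma_pos_of_pos (by positivity)
  have hpow : ∀ j : ℕ, M / r ^ ((j : ℝ) * α) = M * ρ ^ j := by
    intro j
    rw [div_eq_mul_inv]
    congr 1
    rw [← Real.rpow_neg hr.le, ← Real.rpow_natCast ρ j, hρdef, ← Real.rpow_mul hr.le]
    congr 1
    ring
  -- sequences
  set b : ℕ → ℝ := fun q => ‖a q‖ * (ρ⁻¹) ^ q with hbdef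
  set S : ℕ → ℝ := fun N => (∑ q ∈ Finset.range N, b q) + 1 with hSdef
  set ε : ℕ → ℝ := fun m => M * ∑ k ∈ Finset.range n,
      (Real.Gamma (((m:ℝ)+(k:ℝ))*α+1) / Real.Gamma (((m:ℝ)+(n:ℝ))*α+1)) * (ρ^k * (ρ⁻¹)^n)
    with hεdef
  have hbnn : ∀ q, 0 ≤ b q := fun q => by positivity
  have hS1 : ∀ N, 1 ≤ S N := by
    intro N
    have : 0 ≤ ∑ q ∈ Finset.range N, b q := Finset.sum_nonneg fun q _ => hbnn q
    simp only [hSdef]; linarith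
  have hεpos : ∀ m, 0 < ε m := by
    intro m
    apply mul_pos hM
    apply Finset.sum_pos _ ⟨0, Finset.mem_range.2 (by omega)⟩
    intro k _
    have h1 := hΓ ((m:ℝ)+(k:ℝ)) (by positivity)
    have h2 := hΓ ((m:ℝ)+(n:ℝ)) (by positivity)
    positivity
  -- ratio monotonicity
  have key2 : ∀ s m k : ℕ, s ≤ m →
      Real.Gamma (((s:ℝ)+(k:ℝ))*α+1) / Real.Gamma ((s:ℝ)*α+1)
        ≤ Real.Gamma (((m:ℝ)+(k:ℝ))*α+1) / Real.Gamma ((m:ℝ)*α+1) := by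
    intro s m k hsm
    have h1 : 0 < Real.Gamma ((s:ℝ)*α+1) := hΓ s (Nat.cast_nonneg s)
    have h2 : 0 < Real.Gamma ((m:ℝ)*α+1) := hΓ m (Nat.cast_nonneg m)
    rw [div_le_div_iff₀ h1 h2]
    have e1 : ((s:ℝ)+(k:ℝ))*α+1 = ((s:ℝ)*α+1) + (k:ℝ)*α := by ring
    have e2 : ((m:ℝ)+(k:ℝ))*α+1 = ((m:ℝ)*α+1) + (k:ℝ)*α := by ring
    have hsm' : (s:ℝ) ≤ (m:ℝ) := Nat.cast_le.2 hsm
    have h4 := my_gamma_four (x := (s:ℝ)*α+1) (y := (m:ℝ)*α+1) (c := (k:ℝ)*α)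
      (by positivity) (by nlinarith [mul_le_mul_of_nonneg_right hsm' hα.le]) (by positivity)
    rw [e1, e2]
    linarith [h4]
  -- key recursive inequality
  have hkey : ∀ m : ℕ, b (m + n) ≤ ε m * S (m + n) := by
    intro m
    have hΓm0 : 0 < Real.Gamma ((m:ℝ)*α+1) := hΓ m (Nat.cast_nonneg m)
    have hΓmn : 0 < Real.Gamma (((m:ℝ)+(n:ℝ))*α+1) := hΓ ((m:ℝ)+(n:ℝ)) (by positivity)
    -- step A: norm inequality
    have hA : ‖a (m+n)‖ * (Real.Gamma (((m:ℝ)+(n:ℝ))*α+1) / Real.Gamma ((m:ℝ)*α+1))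
        ≤ ∑ k ∈ Finset.range n, ∑ s ∈ Finset.range (m+1), ‖a (s+k)‖ * (M * ρ^(m-s)) *
            (Real.Gamma (((m:ℝ)+(k:ℝ))*α+1) / Real.Gamma ((m:ℝ)*α+1)) := by
      have h0 := congrArg norm (hrec m)
      rw [norm_neg, norm_mul, norm_div, Complex.norm_real, Complex.norm_real,
          Real.norm_of_nonneg hΓmn.le, Real.norm_of_nonneg hΓm0.le] at h0
      rw [h0]
      refine le_trans (norm_sum_le _ _) ?_
      apply Finset.sum_le_sum
      intro k hk
      refine le_trans (norm_sum_le _ _) ?_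
      apply Finset.sum_le_sum
      intro s hs
      have hΓs0 : 0 < Real.Gamma ((s:ℝ)*α+1) := hΓ s (Nat.cast_nonneg s)
      have hΓsk : 0 < Real.Gamma (((s:ℝ)+(k:ℝ))*α+1) := hΓ ((s:ℝ)+(k:ℝ)) (by positivity)
      rw [norm_mul, norm_mul, norm_div, Complex.norm_real, Complex.norm_real,
          Real.norm_of_nonneg hΓsk.le, Real.norm_of_nonneg hΓs0.le]
      have hp' : ‖p (m-s) k‖ ≤ M * ρ^(m-s) := by
        rw [← hpow]; exact hp _ k (Finset.mem_range.1 hk)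
      have hs' : s ≤ m := Nat.lt_succ_iff.1 (Finset.mem_range.1 hs)
      have hratio := key2 s m k hs'
      apply mul_le_mul _ hratio (by positivity) (by positivity)
      exact mul_le_mul le_rfl hp' (norm_nonneg _) (norm_nonneg _)
    -- step B: bound each inner sum
    have hB : ∀ k ∈ Finset.range n,
        ∑ s ∈ Finset.range (m+1), ‖a (s+k)‖ * (M * ρ^(m-s)) *
            (Real.Gamma (((m:ℝ)+(k:ℝ))*α+1) / Real.Gamma ((m:ℝ)*α+1))
          ≤ M * (Real.Gamma (((m:ℝ)+(k:ℝ))*α+1) / Real.Gamma ((m:ℝ)*α+1)) *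
              (ρ^(m+k) * S (m+n)) := by
      intro k hk
      have hcong : ∀ s ∈ Finset.range (m+1),
          ‖a (s+k)‖ * (M * ρ^(m-s)) *
              (Real.Gamma (((m:ℝ)+(k:ℝ))*α+1) / Real.Gamma ((m:ℝ)*α+1))
            = (M * (Real.Gamma (((m:ℝ)+(k:ℝ))*α+1) / Real.Gamma ((m:ℝ)*α+1)) * ρ^(m+k))
                * b (s+k) := by
        intro s hs
        have hs' : s ≤ m := Nat.lt_succ_iff.1 (Finset.mem_range.1 hs)
        have hsplit : ρ^(m+k) = ρ^(m-s) * ρ^(s+k) := by rw [← pow_add]; congr 1; omega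
        simp only [hbdef]
        rw [hsplit, inv_pow]
        field_simp
      rw [Finset.sum_congr rfl hcong, ← Finset.mul_sum]
      have hG : 0 < Real.Gamma (((m:ℝ)+(k:ℝ))*α+1) / Real.Gamma ((m:ℝ)*α+1) :=
        div_pos (hΓ ((m:ℝ)+(k:ℝ)) (by positivity)) (hΓ m (Nat.cast_nonneg m))
      have hfac : (0:ℝ) ≤ M * (Real.Gamma (((m:ℝ)+(k:ℝ))*α+1) / Real.Gamma ((m:ℝ)*α+1)) * ρ^(m+k) :=
        mul_nonneg (mul_nonneg hM.le hG.le) (by positivity)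
      have hsum : ∑ s ∈ Finset.range (m+1), b (s+k) ≤ S (m+n) := ?_
      · calc (M * (Real.Gamma (((m:ℝ)+(k:ℝ))*α+1) / Real.Gamma ((m:ℝ)*α+1)) * ρ^(m+k))
              * ∑ s ∈ Finset.range (m+1), b (s+k)
            ≤ (M * (Real.Gamma (((m:ℝ)+(k:ℝ))*α+1) / Real.Gamma ((m:ℝ)*α+1)) * ρ^(m+k))
              * S (m+n) := mul_le_mul_of_nonneg_left hsum hfac
          _ = M * (Real.Gamma (((m:ℝ)+(k:ℝ))*α+1) / Real.Gamma ((m:ℝ)*α+1))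
              * (ρ^(m+k) * S (m+n)) := by ring
      have himg : ∑ s ∈ Finset.range (m+1), b (s+k)
          = ∑ q ∈ (Finset.range (m+1)).image (· + k), b q := by
        rw [Finset.sum_image]
        intro x _ y _ h
        simp only at h
        omega
      have hkn : k < n := Finset.mem_range.1 hk
      have hsub : (Finset.range (m+1)).image (· + k) ⊆ Finset.range (m+n) := by
        intro q hq
        simp only [Finset.mem_image, Finset.mem_range] at hq ⊢
        omega
      calc ∑ s ∈ Finset.range (m+1), b (s+k)
          = ∑ q ∈ (Finset.range (m+1)).image (· + k), b q := himg
        _ ≤ ∑ q ∈ Finset.range (m+n), b q :=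
            Finset.sum_le_sum_of_subset_of_nonneg hsub (fun q _ _ => hbnn q)
        _ ≤ S (m+n) := by simp only [hSdef]; linarith
    have hchain := le_trans hA (Finset.sum_le_sum hB)
    -- rewrite RHS as (ε m * S (m+n)) * (ρ^(m+n) * (Γmn/Γm0))
    have heq : ∑ k ∈ Finset.range n, M *
          (Real.Gamma (((m:ℝ)+(k:ℝ))*α+1) / Real.Gamma ((m:ℝ)*α+1)) * (ρ^(m+k) * S (m+n))
        = (ε m * S (m+n)) * (ρ^(m+n) *
            (Real.Gamma (((m:ℝ)+(n:ℝ))*α+1) / Real.Gamma ((m:ℝ)*α+1))) := by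
      simp only [hεdef]
      rw [Finset.mul_sum, Finset.sum_mul, Finset.sum_mul]
      apply Finset.sum_congr rfl
      intro k hk
      have h1 : Real.Gamma (((m:ℝ)+(k:ℝ))*α+1) ≠ 0 :=
        ne_of_gt (hΓ ((m:ℝ)+(k:ℝ)) (by positivity))
      rw [inv_pow]
      field_simp
      ring
    rw [heq] at hchain
    have hgpos : 0 < Real.Gamma (((m:ℝ)+(n:ℝ))*α+1) / Real.Gamma ((m:ℝ)*α+1) :=
      div_pos hΓmn hΓm0
    have hassoc : (ε m * S (m+n)) * (ρ^(m+n) *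
        (Real.Gamma (((m:ℝ)+(n:ℝ))*α+1) / Real.Gamma ((m:ℝ)*α+1)))
        = ((ε m * S (m+n)) * ρ^(m+n)) *
            (Real.Gamma (((m:ℝ)+(n:ℝ))*α+1) / Real.Gamma ((m:ℝ)*α+1)) := by ring
    rw [hassoc] at hchain
    have h2 : ‖a (m+n)‖ ≤ (ε m * S (m+n)) * ρ^(m+n) :=
      le_of_mul_le_mul_right hchain hgpos
    calc b (m+n) = ‖a (m+n)‖ * (ρ⁻¹)^(m+n) := rfl
      _ ≤ ((ε m * S (m+n)) * ρ^(m+n)) * (ρ⁻¹)^(m+n) :=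
          mul_le_mul_of_nonneg_right h2 (by positivity)
      _ = ε m * S (m+n) := by
          rw [inv_pow]; field_simp
  -- ε tends to zero
  have hεto : Tendsto ε atTop (nhds 0) := by
    have hterm : ∀ k, k < n → Tendsto (fun m : ℕ =>
        (Real.Gamma (((m:ℝ)+(k:ℝ))*α+1) / Real.Gamma (((m:ℝ)+(n:ℝ))*α+1)) * (ρ^k * (ρ⁻¹)^n))
        atTop (nhds 0) := by
      intro k hk
      have hc : (0:ℝ) < ((n:ℝ)-(k:ℝ))*α := by
        have : (k:ℝ) < (n:ℝ) := Nat.cast_lt.2 hk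
        nlinarith
      have htk : Tendsto (fun m : ℕ =>
          Real.Gamma (((m:ℝ)+(k:ℝ))*α+1) / Real.Gamma (((m:ℝ)+(n:ℝ))*α+1)) atTop (nhds 0) := by
        apply squeeze_zero' (g := fun m : ℕ => (((m:ℝ)+(k:ℝ))*α) ^ (-(((n:ℝ)-(k:ℝ))*α)))
        · exact Eventually.of_forall fun m =>
            le_of_lt (div_pos (hΓ ((m:ℝ)+(k:ℝ)) (by positivity)) (hΓ ((m:ℝ)+(n:ℝ)) (by positivity)))
        · filter_upwards [eventually_ge_atTop 1] with m hm
          have hm1 : (1:ℝ) ≤ (m:ℝ) := Nat.one_le_cast.2 hm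
          have hbase : (0:ℝ) < ((m:ℝ)+(k:ℝ))*α := by
            have : (0:ℝ) ≤ (k:ℝ) := Nat.cast_nonneg k
            nlinarith
          have hx : (1:ℝ) < ((m:ℝ)+(k:ℝ))*α+1 := by linarith
          have hlow := my_gamma_lower hx hc
          have hxc : ((m:ℝ)+(k:ℝ))*α+1 + ((n:ℝ)-(k:ℝ))*α = ((m:ℝ)+(n:ℝ))*α+1 := by ring
          have hsub : ((m:ℝ)+(k:ℝ))*α+1-1 = ((m:ℝ)+(k:ℝ))*α := by ring
          rw [hxc, hsub] at hlow
          have hΓtop : 0 < Real.Gamma (((m:ℝ)+(n:ℝ))*α+1) := hΓ ((m:ℝ)+(n:ℝ)) (by positivity)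
          have hyc : (0:ℝ) < (((m:ℝ)+(k:ℝ))*α) ^ (((n:ℝ)-(k:ℝ))*α) :=
            Real.rpow_pos_of_pos hbase _
          rw [Real.rpow_neg hbase.le, div_le_iff₀ hΓtop, inv_mul_eq_div, le_div_iff₀ hyc]
          exact hlow
        · have h1 : Tendsto (fun m : ℕ => ((m:ℝ)+(k:ℝ))*α) atTop atTop :=
            Tendsto.atTop_mul_const hα
              (tendsto_atTop_add_const_right atTop (k:ℝ) tendsto_natCast_atTop_atTop)
          exact (tendsto_rpow_neg_atTop hc).comp h1
      have := htk.mul_const (ρ^k * (ρ⁻¹)^n)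
      simpa using this
    have h0 : Tendsto (fun m : ℕ => ∑ k ∈ Finset.range n,
        (Real.Gamma (((m:ℝ)+(k:ℝ))*α+1) / Real.Gamma (((m:ℝ)+(n:ℝ))*α+1)) * (ρ^k * (ρ⁻¹)^n))
        atTop (nhds 0) := by
      have := tendsto_finset_sum (Finset.range n)
        (fun k hk => hterm k (Finset.mem_range.1 hk))
      simpa using this
    have := h0.const_mul M
    simpa [hεdef] using this
  -- growth of S
  have hSprod : ∀ m, S (n+m) ≤ S n * ∏ i ∈ Finset.range m, (1+ε i) := by
    intro m
    induction m with
    | zero => simp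
    | succ m ih =>
      have h1 : S (n+(m+1)) = S (n+m) + b (n+m) := by
        simp only [hSdef]
        rw [show n+(m+1) = (n+m)+1 by omega, Finset.sum_range_succ]
        ring
      have hbm : b (n+m) ≤ ε m * S (n+m) := by
        rw [add_comm n m]; exact hkey m
      have hεnn : (0:ℝ) ≤ ε m := (hεpos m).le
      calc S (n+(m+1)) = S (n+m) + b (n+m) := h1
        _ ≤ S (n+m) + ε m * S (n+m) := by linarith
        _ = (1+ε m) * S (n+m) := by ring
        _ ≤ (1+ε m) * (S n * ∏ i ∈ Finset.range m, (1+ε i)) :=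
            mul_le_mul_of_nonneg_left ih (by linarith)
        _ = S n * ∏ i ∈ Finset.range (m+1), (1+ε i) := by
            rw [Finset.prod_range_succ]; ring
  -- the sequence β
  set β : ℕ → ℝ := fun q =>
    if q < n then ‖a q‖ * (ρ⁻¹)^(q-1) + 1 else ρ * ε (q-n) * (S n + 1) with hβdef
  have hβpos : ∀ q, 0 < β q := by
    intro q
    simp only [hβdef]
    split
    · have h1 : (0:ℝ) ≤ ‖a q‖ * (ρ⁻¹)^(q-1) := mul_nonneg (norm_nonneg _) (by positivity)
      linarith
    · exact mul_pos (mul_pos hρ (hεpos _)) (by linarith [hS1 n])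
  have hβn : ∀ m : ℕ, β (n+m) = ρ * ε m * (S n + 1) := by
    intro m
    simp only [hβdef, if_neg (by omega : ¬ n+m < n)]
    rw [show n + m - n = m from by omega]
  have hβto : Tendsto β atTop (nhds 0) := by
    have hEq : β =ᶠ[atTop] fun q => ρ * ε (q-n) * (S n + 1) := by
      filter_upwards [eventually_ge_atTop n] with q hq
      simp only [hβdef, if_neg (by omega : ¬ q < n)]
    rw [tendsto_congr' hEq]
    have h1 : Tendsto (fun q : ℕ => q - n) atTop atTop := tendsto_sub_atTop_nat n
    have := ((hεto.comp h1).const_mul ρ).mul_const (S n + 1)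
    simpa using this
  -- main bound
  have hprodρ : ∀ (t : Finset ℕ), ρ ^ t.card ≤ ∏ j ∈ t, (ρ + β j) := by
    intro t
    rw [← Finset.prod_const]
    exact Finset.prod_le_prod (fun _ _ => hρ.le) (fun j _ => by linarith [hβpos j])
  have hmain : ∀ q, ‖a q‖ ≤ β q * ∏ j ∈ Finset.Icc 1 (q-1), (ρ + β j) := by
    intro q
    by_cases hq : q < n
    · have hβq : β q = ‖a q‖ * (ρ⁻¹)^(q-1) + 1 := by simp only [hβdef, if_pos hq]
      have hcard : (Finset.Icc 1 (q-1)).card = q - 1 := by rw [Nat.card_Icc]; omega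
      calc ‖a q‖ = (‖a q‖ * (ρ⁻¹)^(q-1)) * ρ^(q-1) := by
            rw [inv_pow]; field_simp
        _ ≤ β q * ρ^(q-1) := by
            apply mul_le_mul_of_nonneg_right _ (by positivity)
            rw [hβq]; linarith
        _ ≤ β q * ∏ j ∈ Finset.Icc 1 (q-1), (ρ + β j) := by
            apply mul_le_mul_of_nonneg_left _ (hβpos q).le
            have h5 := hprodρ (Finset.Icc 1 (q-1))
            rwa [hcard] at h5
    · push_neg at hq
      obtain ⟨m, rfl⟩ : ∃ m, q = n + m := ⟨q - n, by omega⟩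
      have hβq := hβn m
      have h1 : ‖a (n+m)‖ = b (n+m) * ρ^(n+m) := by
        simp only [hbdef, inv_pow]
        field_simp
      have h2 : b (n+m) ≤ ε m * (S n * ∏ i ∈ Finset.range m, (1+ε i)) := by
        calc b (n+m) = b (m+n) := by rw [add_comm]
          _ ≤ ε m * S (m+n) := hkey m
          _ ≤ ε m * (S n * ∏ i ∈ Finset.range m, (1+ε i)) := by
              apply mul_le_mul_of_nonneg_left _ (hεpos m).le
              rw [add_comm m n]; exact hSprod m
      have hprodnn : (0:ℝ) ≤ ∏ i ∈ Finset.range m, (1+ε i) :=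
        Finset.prod_nonneg fun i _ => by linarith [hεpos i]
      have hIcc : Finset.Icc 1 (n+m-1) = Finset.Ico 1 (n+m) := by
        rw [← Finset.Ico_add_one_right_eq_Icc]
        congr 1
        omega
      have hsplit : (∏ j ∈ Finset.Ico 1 n, (ρ+β j)) * (∏ j ∈ Finset.Ico n (n+m), (ρ+β j))
          = ∏ j ∈ Finset.Ico 1 (n+m), (ρ+β j) :=
        Finset.prod_Ico_consecutive _ hn (by omega)
      have hP1 : ρ^(n-1) ≤ ∏ j ∈ Finset.Ico 1 n, (ρ+β j) := by
        have := hprodρ (Finset.Ico 1 n)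
        rwa [Nat.card_Ico] at this
      have hP2 : ρ^m * ∏ i ∈ Finset.range m, (1+ε i) ≤ ∏ j ∈ Finset.Ico n (n+m), (ρ+β j) := by
        rw [Finset.prod_Ico_eq_prod_range]
        have hnm : n + m - n = m := by omega
        rw [hnm]
        calc ρ^m * ∏ i ∈ Finset.range m, (1+ε i)
            = ∏ i ∈ Finset.range m, (ρ * (1+ε i)) := by
              rw [Finset.prod_mul_distrib, Finset.prod_const, Finset.card_range]
          _ ≤ ∏ i ∈ Finset.range m, (ρ + β (n+i)) := by
              apply Finset.prod_le_prod
              · intro i _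
                exact mul_nonneg hρ.le (by linarith [hεpos i])
              · intro i _
                rw [hβn i]
                have h6 : (ρ * ε i) * 1 ≤ (ρ * ε i) * (S n + 1) :=
                  mul_le_mul_of_nonneg_left (by linarith [hS1 n]) (mul_pos hρ (hεpos i)).le
                nlinarith [h6]
      have hpowq : ρ * ρ^(n-1) * ρ^m = ρ^(n+m) := by
        have he : 1 + (n-1) + m = n + m := by omega
        calc ρ * ρ^(n-1) * ρ^m = ρ^(1+(n-1)+m) := by rw [pow_add, pow_add, pow_one]
          _ = ρ^(n+m) := by rw [he]
      calc ‖a (n+m)‖ = b (n+m) * ρ^(n+m) := h1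
        _ ≤ (ε m * (S n * ∏ i ∈ Finset.range m, (1+ε i))) * ρ^(n+m) :=
            mul_le_mul_of_nonneg_right h2 (by positivity)
        _ ≤ (ρ * ε m * (S n + 1)) * (ρ^(n-1) * (ρ^m * ∏ i ∈ Finset.range m, (1+ε i))) := by
            have hre : (ρ * ε m * (S n + 1)) * (ρ^(n-1) * (ρ^m * ∏ i ∈ Finset.range m, (1+ε i)))
                = (ε m * ((S n + 1) * ∏ i ∈ Finset.range m, (1+ε i))) * ρ^(n+m) := by
              rw [← hpowq]; ring
            rw [hre]
            apply mul_le_mul_of_nonneg_right _ (by positivity)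
            apply mul_le_mul_of_nonneg_left _ (hεpos m).le
            apply mul_le_mul_of_nonneg_right _ hprodnn
            linarith
        _ ≤ β (n+m) * ∏ j ∈ Finset.Icc 1 (n+m-1), (ρ + β j) := by
            rw [hβq, hIcc, ← hsplit]
            apply mul_le_mul_of_nonneg_left _
              (mul_nonneg (mul_nonneg hρ.le (hεpos m).le) (by linarith [hS1 n]))
            apply mul_le_mul hP1 hP2 (mul_nonneg (by positivity) hprodnn)
            exact Finset.prod_nonneg fun j _ => by linarith [hβpos j]
  -- limsup bound
  have hlimsup : Filter.limsup (fun q : ℕ => ‖a q‖ ^ ((1:ℝ)/q)) atTop ≤ ρ := by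
    have hcobdd : IsCoboundedUnder (· ≤ ·) atTop (fun q : ℕ => ‖a q‖ ^ ((1:ℝ)/q)) := by
      apply Filter.IsBoundedUnder.isCoboundedUnder_le
      exact isBoundedUnder_of ⟨0, fun q => Real.rpow_nonneg (norm_nonneg _) _⟩
    apply le_of_forall_gt_imp_ge_of_dense
    intro c hc
    apply Filter.limsup_le_of_le hcobdd
    set ρ' : ℝ := (ρ + c)/2 with hρ'def
    have hρ'1 : ρ < ρ' := by rw [hρ'def]; linarith
    have hρ'2 : ρ' < c := by rw [hρ'def]; linarith
    have hρ'pos : 0 < ρ' := lt_trans hρ hρ'1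
    have hev : ∀ᶠ j in atTop, β j < ρ' - ρ :=
      hβto.eventually_lt_const (by linarith : (0:ℝ) < ρ' - ρ)
    obtain ⟨N, hN⟩ := eventually_atTop.1 hev
    set N' := max N 1 with hN'def
    set P0 : ℝ := ∏ j ∈ Finset.Ico 1 N', (ρ + β j) with hP0def
    have hP0pos : 0 < P0 :=
      Finset.prod_pos fun j _ => by linarith [hβpos j]
    set D : ℝ := (ρ' * P0) / ρ'^N' with hDdef
    have hDpos : 0 < D := div_pos (mul_pos hρ'pos hP0pos) (pow_pos hρ'pos _)
    have hAq : ∀ᶠ q in atTop, ‖a q‖ ≤ D * ρ'^q := by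
      filter_upwards [eventually_ge_atTop (N'+1)] with q hq
      have h1 := hmain q
      have hq1 : 1 ≤ q := by omega
      have hIcc : Finset.Icc 1 (q-1) = Finset.Ico 1 q := by
        rw [← Finset.Ico_add_one_right_eq_Icc]; congr 1; omega
      have hsplit : (∏ j ∈ Finset.Ico 1 N', (ρ+β j)) * (∏ j ∈ Finset.Ico N' q, (ρ+β j))
          = ∏ j ∈ Finset.Ico 1 q, (ρ+β j) :=
        Finset.prod_Ico_consecutive _ (le_max_right N 1) (by omega)
      have h2 : ∏ j ∈ Finset.Ico N' q, (ρ+β j) ≤ ρ'^(q - N') := by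
        calc ∏ j ∈ Finset.Ico N' q, (ρ+β j) ≤ ∏ j ∈ Finset.Ico N' q, ρ' := by
              apply Finset.prod_le_prod
              · intro j _; linarith [hβpos j]
              · intro j hj
                have hjN : N ≤ j := le_trans (le_max_left N 1) (Finset.mem_Ico.1 hj).1
                have := hN j hjN
                linarith
          _ = ρ'^(q-N') := by rw [Finset.prod_const, Nat.card_Ico]
      have hβqle : β q ≤ ρ' := by
        have := hN q (by omega)
        linarith
      have hDe : D * ρ'^q = ρ' * (P0 * ρ'^(q-N')) := by
        have hpows : ρ'^q = ρ'^(q-N') * ρ'^N' := by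
          rw [← pow_add]; congr 1; omega
        rw [hDdef, hpows]
        field_simp
      calc ‖a q‖ ≤ β q * ∏ j ∈ Finset.Icc 1 (q-1), (ρ + β j) := h1
        _ = β q * ((∏ j ∈ Finset.Ico 1 N', (ρ+β j)) * (∏ j ∈ Finset.Ico N' q, (ρ+β j))) := by
            rw [hIcc, ← hsplit]
        _ ≤ ρ' * (P0 * ρ'^(q-N')) := by
            apply mul_le_mul hβqle _ _ hρ'pos.le
            · apply mul_le_mul_of_nonneg_left h2 hP0pos.le
            · apply mul_nonneg (Finset.prod_nonneg fun j _ => by linarith [hβpos j])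
              exact Finset.prod_nonneg fun j _ => by linarith [hβpos j]
        _ = D * ρ'^q := hDe.symm
    have hDten : Tendsto (fun q : ℕ => D ^ ((1:ℝ)/q) * ρ') atTop (nhds ρ') := by
      have h1 : Tendsto (fun q : ℕ => (1:ℝ)/q) atTop (nhds 0) :=
        tendsto_one_div_atTop_nhds_zero_nat
      have hfun : ∀ x : ℝ, D ^ x * ρ' = Real.exp (Real.log D * x) * ρ' := fun x => by
        rw [Real.rpow_def_of_pos hDpos]
      have hcont : Continuous fun x : ℝ => Real.exp (Real.log D * x) * ρ' :=
        ((Real.continuous_exp.comp (continuous_const.mul continuous_id)).mul continuous_const)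
      have h2 : Tendsto (fun x : ℝ => D ^ x * ρ') (nhds 0) (nhds ρ') := by
        have := hcont.tendsto 0
        simp only [mul_zero, Real.exp_zero, one_mul] at this
        simpa only [← hfun] using this
      exact h2.comp h1
    have hin : ∀ᶠ q : ℕ in atTop, D ^ ((1:ℝ)/q) * ρ' < c := hDten.eventually_lt_const hρ'2
    filter_upwards [hAq, hin, eventually_ge_atTop 1] with q h1 h2 hq1
    have h3 : ‖a q‖ ^ ((1:ℝ)/q) ≤ (D * ρ'^q) ^ ((1:ℝ)/q) :=
      Real.rpow_le_rpow (norm_nonneg _) h1 (by positivity)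
    have h4 : (D * ρ'^q : ℝ) ^ ((1:ℝ)/q) = D ^ ((1:ℝ)/q) * ρ' := by
      rw [Real.mul_rpow hDpos.le (by positivity)]
      congr 1
      rw [← Real.rpow_natCast ρ' q, ← Real.rpow_mul hρ'pos.le]
      rw [mul_one_div, div_self (by positivity : (q:ℝ) ≠ 0), Real.rpow_one]
    rw [h4] at h3
    linarith
  exact ⟨β, hβpos, hβto, hmain, hlimsup⟩
end

section
/- Let α > 0 and f be an entire function with f(z) = ∑_{n=0}^∞ a_n z^n. Then the Gelfond–Leontiev integral operator (ℐ_α f)(z) = ∑_{n=0}^∞ a_n (Γ(nα+1)/Γ((n+1)α+1)) z^(n+1) admits the integral representation (ℐ_α f)(z) = (z/Γ(α)) ∫₀¹ (1−t)^(α−1) f(z t^α) dt, and satisfies ℐ_α(𝒟_α f)(z) = f(z) − f(0), where (𝒟_α f)(z) = ∑_{n≥1} a_n (Γ(nα+1)/Γ(nα+1−α)) z^(n−1). -/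
open intervalIntegral

open MeasureTheory Set in
private lemma gl_beta_integrable {α b : ℝ} (hα : 0 < α) (hb : 0 < b) :
    IntervalIntegrable
      (fun t : ℝ => (((1 - t) ^ (α - 1) : ℝ) : ℂ) * (((t ^ (b - 1) : ℝ)) : ℂ))
      MeasureTheory.volume 0 1 := by
  have hb' : 0 < Complex.re (b : ℂ) := by simpa using hb
  have hα' : 0 < Complex.re (α : ℂ) := by simpa using hα
  refine (Complex.betaIntegral_convergent hb' hα').congr ?_
  intro t ht
  beta_reduce
  rw [Set.uIoc_of_le (by norm_num : (0:ℝ) ≤ 1)] at ht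
  rw [Complex.ofReal_cpow ht.1.le, Complex.ofReal_cpow (by linarith [ht.2])]
  push_cast
  ring

open MeasureTheory Set in
private lemma gl_beta_eval {α b : ℝ} (hα : 0 < α) (hb : 0 < b) :
    ∫ t in (0:ℝ)..1, (((1 - t) ^ (α - 1) : ℝ) : ℂ) * (((t ^ (b - 1) : ℝ)) : ℂ)
      = ((Real.Gamma b * Real.Gamma α / Real.Gamma (b + α) : ℝ) : ℂ) := by
  have hb' : 0 < Complex.re (b : ℂ) := by simpa using hb
  have hα' : 0 < Complex.re (α : ℂ) := by simpa using hα
  have h1 : (∫ t in (0:ℝ)..1, (((1 - t) ^ (α - 1) : ℝ) : ℂ) * (((t ^ (b - 1) : ℝ)) : ℂ))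
      = Complex.betaIntegral b α := by
    refine intervalIntegral.integral_congr fun t ht => ?_
    rw [Set.uIcc_of_le (by norm_num : (0:ℝ) ≤ 1)] at ht
    rw [Complex.ofReal_cpow ht.1, Complex.ofReal_cpow (by linarith [ht.2])]
    push_cast
    ring
  have h2 := Complex.Gamma_mul_Gamma_eq_betaIntegral hb' hα'
  have hne : Complex.Gamma ((b : ℂ) + α) ≠ 0 := by
    refine Complex.Gamma_ne_zero fun m => ?_
    intro hcontra
    have : (b + α : ℝ) = -(m : ℝ) := by
      have := congrArg Complex.re hcontra
      simpa using this
    have hm : (0:ℝ) ≤ (m:ℝ) := Nat.cast_nonneg m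
    nlinarith
  have h3 : Complex.betaIntegral b α
      = Complex.Gamma b * Complex.Gamma α / Complex.Gamma ((b:ℂ) + α) := by
    field_simp
    linear_combination -h2
  rw [h1, h3]
  push_cast [← Complex.Gamma_ofReal]
  rfl

/-- For an entire `f(z) = ∑ aₙ zⁿ`, the Gelfond–Leontiev integral operator
`(ℐ_α f)(z) = ∑ aₙ (Γ(nα+1)/Γ((n+1)α+1)) z^(n+1)` has the integral representation
`(ℐ_α f)(z) = (z/Γ(α)) ∫₀¹ (1-t)^(α-1) f(z t^α) dt`, and
`ℐ_α (𝒟_α f)(z) = f(z) − f(0)`, where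
`(𝒟_α f)(z) = ∑_{n≥1} aₙ (Γ(nα+1)/Γ(nα+1-α)) z^(n-1)`. -/
theorem gelfond_leontiev_integral (α : ℝ) (hα : 0 < α) (a : ℕ → ℂ) (f : ℂ → ℂ)
    (hf : ∀ z : ℂ, HasSum (fun n : ℕ => a n * z ^ n) (f z)) (z : ℂ) :
    (∑' n : ℕ, a n *
        (Real.Gamma ((n : ℝ) * α + 1) / Real.Gamma (((n : ℝ) + 1) * α + 1)) * z ^ (n + 1))
      = z / (Real.Gamma α : ℂ) *
          ∫ t in (0:ℝ)..1, (((1 - t) ^ (α - 1) : ℝ) : ℂ) * f (z * ((t ^ α : ℝ) : ℂ))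
    ∧ (∑' n : ℕ, (a (n + 1) *
          (Real.Gamma (((n : ℝ) + 1) * α + 1) / Real.Gamma (((n : ℝ) + 1) * α + 1 - α))) *
          (Real.Gamma ((n : ℝ) * α + 1) / Real.Gamma (((n : ℝ) + 1) * α + 1)) * z ^ (n + 1))
        = f z - a 0 := by
  constructor
  · -- integral representation
    set μ : MeasureTheory.Measure ℝ := MeasureTheory.volume.restrict (Set.Ioc (0:ℝ) 1) with hμ
    set c : ℕ → ℂ := fun n => a n * z ^ n with hc
    have hc_sum : Summable fun n => ‖c n‖ := by
      have hs := (hf ((2:ℂ) * z)).summable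
      have htend := hs.tendsto_atTop_zero.norm
      obtain ⟨C, hC⟩ := htend.bddAbove_range
      have hCb : ∀ n : ℕ, ‖a n * ((2:ℂ) * z) ^ n‖ ≤ C := fun n => hC ⟨n, rfl⟩
      have key : ∀ n : ℕ, ‖c n‖ ≤ C * (1/2 : ℝ) ^ n := by
        intro n
        have h2 : (0:ℝ) < (2:ℝ) ^ n := by positivity
        have hnorm : ‖c n‖ * 2 ^ n = ‖a n * ((2:ℂ) * z) ^ n‖ := by
          simp only [hc, norm_mul, norm_pow, norm_mul]
          simp
          ring
        have h3 : ((1:ℝ)/2) ^ n = ((2:ℝ) ^ n)⁻¹ := by rw [one_div, inv_pow]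
        rw [h3, ← div_eq_mul_inv, le_div_iff₀ h2, hnorm]
        exact hCb n
      exact Summable.of_nonneg_of_le (fun n => norm_nonneg _) key
        (((summable_geometric_of_lt_one (by norm_num) (by norm_num))).mul_left C)
    have hb : ∀ n : ℕ, (0:ℝ) < (n:ℝ) * α + 1 := fun n => by positivity
    set F : ℕ → ℝ → ℂ := fun n t =>
      (((1 - t) ^ (α - 1) : ℝ) : ℂ) * (((t ^ ((n:ℝ) * α + 1 - 1) : ℝ)) : ℂ) * c n with hF
    have hFii : ∀ n, IntervalIntegrable (F n) MeasureTheory.volume 0 1 :=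
      fun n => (gl_beta_integrable hα (hb n)).mul_const (c n)
    have hFint : ∀ n, MeasureTheory.Integrable (F n) μ := fun n => by
      rw [hμ]
      exact (intervalIntegrable_iff_integrableOn_Ioc_of_le (by norm_num)).1 (hFii n)
    set G : ℝ → ℂ := fun t =>
      (((1 - t) ^ (α - 1) : ℝ) : ℂ) * (((t ^ ((1:ℝ) - 1) : ℝ)) : ℂ) with hG
    have hGint : MeasureTheory.Integrable G μ := by
      rw [hμ]
      exact (intervalIntegrable_iff_integrableOn_Ioc_of_le (by norm_num)).1
        (gl_beta_integrable hα one_pos)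
    set K : ℝ := ∫ t, ‖G t‖ ∂μ with hK
    have hFnorm : ∀ n, (∫ t, ‖F n t‖ ∂μ) ≤ ‖c n‖ * K := by
      intro n
      rw [hK, ← MeasureTheory.integral_const_mul]
      refine MeasureTheory.integral_mono_of_nonneg
        (Filter.Eventually.of_forall fun t => norm_nonneg _)
        (hGint.norm.const_mul ‖c n‖) ?_
      rw [hμ]
      filter_upwards [MeasureTheory.ae_restrict_mem measurableSet_Ioc] with t ht
      have ht0 : (0:ℝ) ≤ t := ht.1.le
      have ht1 : t ≤ 1 := ht.2
      have hle : t ^ ((n:ℝ) * α + 1 - 1) ≤ 1 := by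
        apply Real.rpow_le_one ht0 ht1
        have : (n:ℝ) * α + 1 - 1 = (n:ℝ) * α := by ring
        rw [this]; positivity
      have hpos : (0:ℝ) ≤ t ^ ((n:ℝ) * α + 1 - 1) := Real.rpow_nonneg ht0 _
      have h1pos : (0:ℝ) ≤ (1 - t) ^ (α - 1) := Real.rpow_nonneg (by linarith) _
      simp only [hF, hG, norm_mul, Complex.norm_real]
      rw [Real.norm_of_nonneg hpos, Real.norm_of_nonneg h1pos,
        Real.norm_of_nonneg (Real.rpow_nonneg ht0 _)]
      have : t ^ ((1:ℝ) - 1) = 1 := by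
        rw [sub_self, Real.rpow_zero]
      rw [this]
      have hab : (1 - t) ^ (α - 1) * t ^ ((n:ℝ) * α + 1 - 1) ≤ (1 - t) ^ (α - 1) * 1 :=
        mul_le_mul_of_nonneg_left hle h1pos
      nlinarith [mul_le_mul_of_nonneg_right hab (norm_nonneg (c n))]
    have hsumint : Summable fun n => ∫ t, ‖F n t‖ ∂μ :=
      Summable.of_nonneg_of_le
        (fun n => MeasureTheory.integral_nonneg fun t => norm_nonneg _)
        hFnorm (hc_sum.mul_right K)
    have hkey := MeasureTheory.hasSum_integral_of_summable_integral_norm hFint hsumint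
    have hpt : ∀ t ∈ Set.Ioc (0:ℝ) 1, (∑' n, F n t)
        = (((1 - t) ^ (α - 1) : ℝ) : ℂ) * f (z * ((t ^ α : ℝ) : ℂ)) := by
      intro t ht
      have ht0 : (0:ℝ) ≤ t := ht.1.le
      have hfs := (hf (z * ((t ^ α : ℝ) : ℂ))).mul_left ((((1 - t) ^ (α - 1) : ℝ)) : ℂ)
      have hterm : ∀ n : ℕ, F n t
          = (((1 - t) ^ (α - 1) : ℝ) : ℂ) * (a n * (z * ((t ^ α : ℝ) : ℂ)) ^ n) := by
        intro n
        have hpow : (((t ^ α : ℝ) : ℂ)) ^ n = (((t ^ ((n:ℝ) * α + 1 - 1)) : ℝ) : ℂ) := by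
          rw [← Complex.ofReal_pow, ← Real.rpow_natCast (t ^ α) n, ← Real.rpow_mul ht0]
          norm_num [mul_comm]
        simp only [hF, hc, mul_pow, ← hpow]
        ring
      calc (∑' n, F n t)
          = ∑' n, (((1 - t) ^ (α - 1) : ℝ) : ℂ) * (a n * (z * ((t ^ α : ℝ) : ℂ)) ^ n) :=
            tsum_congr hterm
        _ = (((1 - t) ^ (α - 1) : ℝ) : ℂ) * f (z * ((t ^ α : ℝ) : ℂ)) := hfs.tsum_eq
    have hint_eq : (∫ t, (∑' n, F n t) ∂μ)
        = ∫ t in (0:ℝ)..1, (((1 - t) ^ (α - 1) : ℝ) : ℂ) * f (z * ((t ^ α : ℝ) : ℂ)) := by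
      rw [intervalIntegral.integral_of_le (by norm_num : (0:ℝ) ≤ 1), hμ]
      exact MeasureTheory.setIntegral_congr_fun measurableSet_Ioc hpt
    have hval : ∀ n : ℕ, (∫ t, F n t ∂μ)
        = ((Real.Gamma ((n:ℝ) * α + 1) * Real.Gamma α
            / Real.Gamma ((n:ℝ) * α + 1 + α) : ℝ) : ℂ) * c n := by
      intro n
      have h1 : (∫ t, F n t ∂μ) = ∫ t in (0:ℝ)..1, F n t := by
        rw [hμ, intervalIntegral.integral_of_le (by norm_num : (0:ℝ) ≤ 1)]
      rw [h1, hF, intervalIntegral.integral_mul_const, gl_beta_eval hα (hb n)]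
    rw [← hint_eq, ← hkey.tsum_eq, ← tsum_mul_left]
    refine tsum_congr fun n => ?_
    rw [hval n]
    have e : ((n:ℝ) + 1) * α + 1 = (n:ℝ) * α + 1 + α := by ring
    rw [e]
    have hΓα : (Real.Gamma α : ℂ) ≠ 0 := by
      exact_mod_cast (Real.Gamma_pos_of_pos hα).ne'
    have hΓ2 : (Real.Gamma ((n:ℝ) * α + 1 + α) : ℂ) ≠ 0 := by
      exact_mod_cast (Real.Gamma_pos_of_pos (by positivity)).ne'
    simp only [hc]
    push_cast
    field_simp
    ring
  · have hterm : ∀ n : ℕ,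
        (a (n + 1) *
          (Real.Gamma (((n : ℝ) + 1) * α + 1) / Real.Gamma (((n : ℝ) + 1) * α + 1 - α))) *
          (Real.Gamma ((n : ℝ) * α + 1) / Real.Gamma (((n : ℝ) + 1) * α + 1)) * z ^ (n + 1)
        = a (n + 1) * z ^ (n + 1) := by
      intro n
      have e1 : ((n : ℝ) + 1) * α + 1 - α = (n : ℝ) * α + 1 := by ring
      rw [e1]
      have h1 : (Real.Gamma ((n:ℝ) * α + 1) : ℂ) ≠ 0 := by
        exact_mod_cast (Real.Gamma_pos_of_pos (by positivity)).ne'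
      have h2 : (Real.Gamma (((n:ℝ) + 1) * α + 1) : ℂ) ≠ 0 := by
        exact_mod_cast (Real.Gamma_pos_of_pos (by positivity)).ne'
      push_cast
      field_simp
    rw [tsum_congr hterm]
    have h := (hasSum_nat_add_iff' (f := fun n : ℕ => a n * z ^ n) 1).mpr (hf z)
    simpa using h.tsum_eq
end
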